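/- Let f₁, f₂, f₃, f₄ ∈ ℤ[t] be monic polynomials that are pairwise coprime in ℚ[t]. If the ℤ[t]-modules ℤ[t]/(f₁f₃f₄) ⊕ ℤ[t]/(f₂f₃) and ℤ[t]/(f₁f₃) ⊕ ℤ[t]/(f₂f₃f₄) are isomorphic, then |Res(f₁,f₄)| = 1 and |Res(f₂,f₄)| = 1. -/

import Mathlib

open Polynomial



/-- The Sylvester-type matrix `A(f,g)` of two integer polynomials: its first
`deg g` columns contain the coefficients of `f, tf, ..., t^{deg g - 1} f` and its last
`deg f` columns contain the coefficients of `g, tg, ..., t^{deg f - 1} g`,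
all expressed in the basis `1, t, ..., t^{deg f + deg g - 1}`. -/
noncomputable def sylvesterMatrix (f g : Polynomial ℤ) :
    Matrix (Fin (f.natDegree + g.natDegree)) (Fin (f.natDegree + g.natDegree)) ℤ :=
  Matrix.of fun i j =>
    if (j : ℕ) < g.natDegree then (Polynomial.X ^ (j : ℕ) * f).coeff (i : ℕ)
    else (Polynomial.X ^ ((j : ℕ) - g.natDegree) * g).coeff (i : ℕ)

/-- The resultant `Res(f,g)` of two integer polynomials, as the determinant of the
Sylvester matrix. -/
noncomputable def res (f g : Polynomial ℤ) : ℤ := (sylvesterMatrix f g).det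

lemma dvd_of_map_dvd {a b : Polynomial ℤ} (ha : a.Monic)
    (h : a.map (Int.castRingHom ℚ) ∣ b.map (Int.castRingHom ℚ)) : a ∣ b :=
  (Polynomial.map_dvd_map _ Int.cast_injective ha).mp h

lemma smul_mk_eq (I : Ideal (Polynomial ℤ)) (x a : Polynomial ℤ) :
    x • (Ideal.Quotient.mk I a) = Ideal.Quotient.mk I (x * a) := rfl

lemma isCoprime_of_iso (f₁ f₂ f₃ f₄ : Polynomial ℤ)
    (h₁ : f₁.Monic) (h₂ : f₂.Monic) (h₃ : f₃.Monic)
    (h12 : IsCoprime (f₁.map (Int.castRingHom ℚ)) (f₂.map (Int.castRingHom ℚ)))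
    (φ : ((Polynomial ℤ ⧸ Ideal.span {f₁ * f₃ * f₄}) ×
          (Polynomial ℤ ⧸ Ideal.span {f₂ * f₃})) ≃ₗ[Polynomial ℤ]
        ((Polynomial ℤ ⧸ Ideal.span {f₁ * f₃}) ×
          (Polynomial ℤ ⧸ Ideal.span {f₂ * f₃ * f₄}))) :
    IsCoprime f₁ f₄ := by
  obtain ⟨a₁, ha₁⟩ := Ideal.Quotient.mk_surjective (φ (Ideal.Quotient.mk _ 1, 0)).1
  obtain ⟨a₂, ha₂⟩ := Ideal.Quotient.mk_surjective (φ (Ideal.Quotient.mk _ 1, 0)).2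
  obtain ⟨b₁, hb₁⟩ := Ideal.Quotient.mk_surjective (φ (0, Ideal.Quotient.mk _ 1)).1
  obtain ⟨b₂, hb₂⟩ := Ideal.Quotient.mk_surjective (φ (0, Ideal.Quotient.mk _ 1)).2
  -- the annihilator relation: (f₂*f₃) • e₂ = 0
  have hann : (f₂ * f₃) • (φ (0, Ideal.Quotient.mk _ 1)) = 0 := by
    rw [← map_smul, Prod.smul_def, smul_zero, smul_mk_eq, mul_one]
    have : Ideal.Quotient.mk (Ideal.span {f₂ * f₃}) (f₂ * f₃) = 0 := by
      rw [Ideal.Quotient.eq_zero_iff_mem]; exact Ideal.subset_span rfl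
    rw [this]
    exact map_zero φ
  have hann1 := congrArg Prod.fst hann
  have hann2 := congrArg Prod.snd hann
  rw [Prod.smul_def] at hann1 hann2
  rw [Prod.fst_zero] at hann1
  rw [Prod.snd_zero] at hann2
  rw [← hb₁, smul_mk_eq] at hann1
  rw [← hb₂, smul_mk_eq] at hann2
  have hd1 : f₁ * f₃ ∣ f₂ * f₃ * b₁ := by
    rwa [Ideal.Quotient.eq_zero_iff_mem, Ideal.mem_span_singleton] at hann1
  have hd2 : f₂ * f₃ * f₄ ∣ f₂ * f₃ * b₂ := by
    rwa [Ideal.Quotient.eq_zero_iff_mem, Ideal.mem_span_singleton] at hann2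
  -- f₁ ∣ b₁
  have hf1b1 : f₁ ∣ b₁ := by
    obtain ⟨k, hk⟩ := hd1
    have hc : f₂ * b₁ = f₁ * k := mul_left_cancel₀ h₃.ne_zero (by linear_combination hk)
    apply dvd_of_map_dvd h₁
    apply h12.dvd_of_dvd_mul_left
    exact ⟨k.map (Int.castRingHom ℚ), by rw [← Polynomial.map_mul, ← Polynomial.map_mul, hc]⟩
  -- f₄ ∣ b₂
  have hf4b2 : f₄ ∣ b₂ := by
    obtain ⟨k, hk⟩ := hd2
    exact ⟨k, mul_left_cancel₀ (mul_ne_zero h₂.ne_zero h₃.ne_zero) (by linear_combination hk)⟩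
  -- surjectivity equations
  have key : ∀ w : (Polynomial ℤ ⧸ Ideal.span {f₁ * f₃}) ×
      (Polynomial ℤ ⧸ Ideal.span {f₂ * f₃ * f₄}), ∃ x y : Polynomial ℤ,
      x • (φ (Ideal.Quotient.mk _ 1, 0)) + y • (φ (0, Ideal.Quotient.mk _ 1)) = w := by
    intro w
    obtain ⟨z, hz⟩ := φ.surjective w
    obtain ⟨x, hx⟩ := Ideal.Quotient.mk_surjective z.1
    obtain ⟨y, hy⟩ := Ideal.Quotient.mk_surjective z.2
    refine ⟨x, y, ?_⟩
    rw [← map_smul, ← map_smul, ← map_add, ← hz]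
    congr 1
    rw [Prod.smul_def, Prod.smul_def, Prod.mk_add_mk, smul_zero, smul_zero,
      smul_mk_eq, smul_mk_eq, mul_one, mul_one, add_zero, zero_add, hx, hy]
  obtain ⟨x, y, hxy⟩ := key (Ideal.Quotient.mk _ 1, 0)
  obtain ⟨x', y', hxy'⟩ := key (0, Ideal.Quotient.mk _ 1)
  -- components
  have c1 : Ideal.Quotient.mk (Ideal.span {f₁ * f₃}) (x * a₁ + y * b₁) = Ideal.Quotient.mk _ 1 := by
    have := congrArg Prod.fst hxy
    simp only [Prod.fst_add, Prod.smul_fst] at this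
    rw [map_add, ← smul_mk_eq, ← smul_mk_eq, ha₁, hb₁]
    exact this
  have c2 : Ideal.Quotient.mk (Ideal.span {f₂ * f₃ * f₄}) (x * a₂ + y * b₂) = 0 := by
    have := congrArg Prod.snd hxy
    simp only [Prod.snd_add, Prod.smul_snd] at this
    rw [map_add, ← smul_mk_eq, ← smul_mk_eq, ha₂, hb₂]
    exact this
  have c4 : Ideal.Quotient.mk (Ideal.span {f₂ * f₃ * f₄}) (x' * a₂ + y' * b₂) =
      Ideal.Quotient.mk _ 1 := by
    have := congrArg Prod.snd hxy'
    simp only [Prod.snd_add, Prod.smul_snd] at this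
    rw [map_add, ← smul_mk_eq, ← smul_mk_eq, ha₂, hb₂]
    exact this
  have d1 : f₁ * f₃ ∣ x * a₁ + y * b₁ - 1 := by
    rwa [Ideal.Quotient.eq, Ideal.mem_span_singleton] at c1
  have d2 : f₂ * f₃ * f₄ ∣ x * a₂ + y * b₂ := by
    rwa [Ideal.Quotient.eq_zero_iff_mem, Ideal.mem_span_singleton] at c2
  have d4 : f₂ * f₃ * f₄ ∣ x' * a₂ + y' * b₂ - 1 := by
    rwa [Ideal.Quotient.eq, Ideal.mem_span_singleton] at c4
  obtain ⟨c₁, hc₁⟩ := hf1b1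
  obtain ⟨c₂, hc₂⟩ := hf4b2
  obtain ⟨k₁, hk₁⟩ := d1
  obtain ⟨k₂, hk₂⟩ := d2
  obtain ⟨k₄, hk₄⟩ := d4
  exact ⟨y * c₁ - f₃ * k₁,
    (x' * (f₂ * f₃ * k₂ - y * c₂) - x * (f₂ * f₃ * k₄ - y' * c₂)) * a₁, by
      linear_combination hk₁ - y * hc₁ - a₁ * x' * hk₂ + a₁ * x * hk₄ +
        a₁ * (x' * y - x * y') * hc₂⟩

lemma sum_range_split (h : ℕ → ℤ) (a b : ℕ) :
    ∑ j ∈ Finset.range (a + b), h j =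
      ∑ j ∈ Finset.range a, h j + ∑ j ∈ Finset.range b, h (a + j) := by
  induction b with
  | zero => simp
  | succ b ih => rw [← Nat.add_assoc, Finset.sum_range_succ, Finset.sum_range_succ, ih]; ring

lemma coeff_mul_eq_sum (a f : Polynomial ℤ) (n : ℕ) (ha : a.degree < n) (i : ℕ) :
    (a * f).coeff i = ∑ j ∈ Finset.range n, a.coeff j * (X ^ j * f).coeff i := by
  by_cases h0 : a = 0
  · simp [h0]
  conv_lhs => rw [a.as_sum_range' n ((natDegree_lt_iff_degree_lt h0).mpr ha)]
  rw [Finset.sum_mul, finset_sum_coeff]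
  refine Finset.sum_congr rfl fun j _ => ?_
  rw [← C_mul_X_pow_eq_monomial, mul_assoc, coeff_C_mul]

lemma isUnit_det_of_isCoprime {f g : Polynomial ℤ} (hf : f.Monic) (hg : g.Monic)
    (hcop : IsCoprime f g) : IsUnit (sylvesterMatrix f g).det := by
  rw [← Matrix.isUnit_iff_isUnit_det]
  rw [← Matrix.mulVec_surjective_iff_isUnit]
  set m := f.natDegree with hm
  set n := g.natDegree with hn
  intro w
  -- the target polynomial
  set p : Polynomial ℤ := ∑ i : Fin (m + n), C (w i) * X ^ (i : ℕ) with hp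
  have hpdeg : p.degree < (m + n : ℕ) := by
    apply lt_of_le_of_lt (degree_sum_le _ _)
    rw [Finset.sup_lt_iff (by exact_mod_cast WithBot.bot_lt_coe (m + n))]
    intro i _
    exact lt_of_le_of_lt (degree_C_mul_X_pow_le _ _) (by exact_mod_cast i.2)
  have hpcoeff : ∀ i : Fin (m + n), p.coeff i = w i := by
    intro i
    rw [hp, finset_sum_coeff]
    rw [Finset.sum_eq_single i]
    · rw [coeff_C_mul, coeff_X_pow, if_pos rfl, mul_one]
    · intro j _ hji
      rw [coeff_C_mul, coeff_X_pow, if_neg (fun h => hji (Fin.ext h.symm)), mul_zero]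
    · intro h; exact absurd (Finset.mem_univ i) h
  obtain ⟨u, v, huv⟩ := hcop
  -- Bezout division
  set a : Polynomial ℤ := (p * u) %ₘ g with haa
  set q : Polynomial ℤ := (p * u) /ₘ g with hq
  set b : Polynomial ℤ := p * v + q * f with hb
  have hmod : a + g * q = p * u := modByMonic_add_div (p * u) g
  have hkey : a * f + b * g = p := by linear_combination f * hmod + p * huv
  have hgdeg : g.degree = (n : WithBot ℕ) := degree_eq_natDegree hg.ne_zero
  have hfdeg : f.degree = (m : WithBot ℕ) := degree_eq_natDegree hf.ne_zero
  have hadeg : a.degree < (n : WithBot ℕ) := by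
    rw [← hgdeg]; exact degree_modByMonic_lt (p * u) hg
  have hbdeg : b.degree < (m : WithBot ℕ) := by
    by_cases hb0 : b = 0
    · rw [hb0, degree_zero]; exact WithBot.bot_lt_coe m
    have hbg : (b * g).degree = b.degree + (n : WithBot ℕ) := by
      rw [degree_mul, hgdeg]
    have hbglt : (b * g).degree < ((m + n : ℕ) : WithBot ℕ) := by
      have hsub : b * g = p - a * f := by linear_combination hkey
      rw [hsub]
      apply lt_of_le_of_lt (degree_sub_le _ _)
      rw [max_lt_iff]
      refine ⟨hpdeg, ?_⟩
      apply lt_of_le_of_lt (degree_mul_le _ _)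
      calc a.degree + f.degree < (n : WithBot ℕ) + (m : WithBot ℕ) := by
            rw [hfdeg]
            exact WithBot.add_lt_add_right (by simp) hadeg
        _ = ((m + n : ℕ) : WithBot ℕ) := by rw [← Nat.cast_add, Nat.add_comm]
    rw [hbg] at hbglt
    have : ((m + n : ℕ) : WithBot ℕ) = (m : WithBot ℕ) + (n : WithBot ℕ) := by
      rw [← Nat.cast_add]
    rw [this] at hbglt
    exact (WithBot.add_lt_add_iff_right (by simp)).mp hbglt
  -- the preimage vector
  refine ⟨fun j => if (j : ℕ) < n then a.coeff (j : ℕ) else b.coeff ((j : ℕ) - n),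
    funext fun i => ?_⟩
  set F : ℕ → ℤ := fun jn => if jn < n then (X ^ jn * f).coeff (i : ℕ) * a.coeff jn
    else (X ^ (jn - n) * g).coeff (i : ℕ) * b.coeff (jn - n) with hF
  have hsum : ((sylvesterMatrix f g).mulVec
      (fun j => if (j : ℕ) < n then a.coeff (j : ℕ) else b.coeff ((j : ℕ) - n))) i =
      ∑ j ∈ Finset.range (m + n), F j := by
    rw [← Fin.sum_univ_eq_sum_range F (m + n)]
    simp only [Matrix.mulVec, dotProduct]
    refine Finset.sum_congr rfl fun j _ => ?_
    by_cases hj : (j : ℕ) < n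
    · simp only [sylvesterMatrix, Matrix.of_apply, hF, hj, if_true, hn]
      rw [hn] at hj; simp only [hj, if_true]
    · simp only [sylvesterMatrix, Matrix.of_apply, hF, hj, if_false, hn]
      rw [hn] at hj; simp only [hj, if_false]
  rw [hsum]
  have hcomm : Finset.range (m + n) = Finset.range (n + m) := by rw [Nat.add_comm]
  rw [hcomm, sum_range_split]
  have hfirst : ∑ j ∈ Finset.range n, F j = (a * f).coeff (i : ℕ) := by
    rw [coeff_mul_eq_sum a f n hadeg (i : ℕ)]
    refine Finset.sum_congr rfl fun j hj => ?_
    rw [hF]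
    simp only []
    rw [if_pos (Finset.mem_range.mp hj), mul_comm]
  have hsecond : ∑ j ∈ Finset.range m, F (n + j) = (b * g).coeff (i : ℕ) := by
    rw [coeff_mul_eq_sum b g m hbdeg (i : ℕ)]
    refine Finset.sum_congr rfl fun j hj => ?_
    rw [hF]
    simp only []
    rw [if_neg (by omega), Nat.add_sub_cancel_left, mul_comm]
  rw [hfirst, hsecond, ← coeff_add, hkey]
  exact hpcoeff i

/-- Theorem 5.1 (b), necessity: for monic `f₁, f₂, f₃, f₄ ∈ ℤ[t]`, pairwise coprime in
`ℚ[t]`, if `ℤ[t]/(f₁f₃f₄) ⊕ ℤ[t]/(f₂f₃) ≅ ℤ[t]/(f₁f₃) ⊕ ℤ[t]/(f₂f₃f₄)` as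
`ℤ[t]`-modules, then `|Res(f₁,f₄)| = 1` and `|Res(f₂,f₄)| = 1`. -/
theorem resultants_of_sum_companion_iso (f₁ f₂ f₃ f₄ : Polynomial ℤ)
    (h₁ : f₁.Monic) (h₂ : f₂.Monic) (h₃ : f₃.Monic) (h₄ : f₄.Monic)
    (h12 : IsCoprime (f₁.map (Int.castRingHom ℚ)) (f₂.map (Int.castRingHom ℚ)))
    (h13 : IsCoprime (f₁.map (Int.castRingHom ℚ)) (f₃.map (Int.castRingHom ℚ)))
    (h14 : IsCoprime (f₁.map (Int.castRingHom ℚ)) (f₄.map (Int.castRingHom ℚ)))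
    (h23 : IsCoprime (f₂.map (Int.castRingHom ℚ)) (f₃.map (Int.castRingHom ℚ)))
    (h24 : IsCoprime (f₂.map (Int.castRingHom ℚ)) (f₄.map (Int.castRingHom ℚ)))
    (h34 : IsCoprime (f₃.map (Int.castRingHom ℚ)) (f₄.map (Int.castRingHom ℚ)))
    (hiso : Nonempty (((Polynomial ℤ ⧸ Ideal.span {f₁ * f₃ * f₄}) ×
          (Polynomial ℤ ⧸ Ideal.span {f₂ * f₃})) ≃ₗ[Polynomial ℤ]
        ((Polynomial ℤ ⧸ Ideal.span {f₁ * f₃}) ×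
          (Polynomial ℤ ⧸ Ideal.span {f₂ * f₃ * f₄})))) :
    (res f₁ f₄).natAbs = 1 ∧ (res f₂ f₄).natAbs = 1 := by
  obtain ⟨φ⟩ := hiso
  have hcop14 : IsCoprime f₁ f₄ := isCoprime_of_iso f₁ f₂ f₃ f₄ h₁ h₂ h₃ h12 φ
  have ψ : ((Polynomial ℤ ⧸ Ideal.span {f₂ * f₃ * f₄}) ×
      (Polynomial ℤ ⧸ Ideal.span {f₁ * f₃})) ≃ₗ[Polynomial ℤ]
      ((Polynomial ℤ ⧸ Ideal.span {f₂ * f₃}) ×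
      (Polynomial ℤ ⧸ Ideal.span {f₁ * f₃ * f₄})) :=
    (LinearEquiv.prodComm _ _ _).trans (φ.symm.trans (LinearEquiv.prodComm _ _ _))
  have hcop24 : IsCoprime f₂ f₄ := isCoprime_of_iso f₂ f₁ f₃ f₄ h₂ h₁ h₃ h12.symm ψ
  exact ⟨Int.isUnit_iff_natAbs_eq.mp (isUnit_det_of_isCoprime h₁ h₄ hcop14),
    Int.isUnit_iff_natAbs_eq.mp (isUnit_det_of_isCoprime h₂ h₄ hcop24)⟩
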